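/- Assume A and B are well-ordered, i.e., for each of them, α_j² = 0 implies α_i² = 0 for all i < j (and likewise for the β's). Let φ : R_A → R_B be a graded ring isomorphism, and set k := #{i : α_i² = 0 in R_A}. Then k = #{i : β_i² = 0 in R_B} and φ(F_k(A)) = F_k(B); in particular φ is k-stable. -/

import Mathlib

open MvPolynomial

namespace Bott

/-- A square integer matrix indexed by `Fin n` (rows, columns).  We think of it as the
matrix `A = (a_{ij})` defining a Bott tower; strict lower triangularity is the
predicate `SLT` below. -/
abbrev Mat (n : ℕ) := Fin n → Fin n → ℤ

/-- `a` is strictly lower triangular: `a i j = 0` unless `j < i`. -/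
def SLT {n : ℕ} (a : Mat n) : Prop := ∀ i j : Fin n, a i j ≠ 0 → (j : ℕ) < (i : ℕ)

section Defs

variable (n : ℕ)

/-- The linear form `α_i = ∑_{j<i} a_{ij} x_j` (the terms with `j ≥ i` vanish for a
strictly lower triangular matrix). -/
noncomputable def alpha (a : Mat n) (i : Fin n) : MvPolynomial (Fin n) ℤ :=
  ∑ j, C (a i j) * X j

/-- The ideal `(x_i² − α_i x_i : 1 ≤ i ≤ n)`. -/
noncomputable def bottIdeal (a : Mat n) : Ideal (MvPolynomial (Fin n) ℤ) :=
  Ideal.span (Set.range fun i : Fin n => X i ^ 2 - alpha n a i * X i)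

/-- The Bott ring `R_A = ℤ[x_1,…,x_n]/(x_i² − α_i x_i)`. -/
abbrev BRing (a : Mat n) := MvPolynomial (Fin n) ℤ ⧸ bottIdeal n a

/-- Quotient projection onto the Bott ring. -/
noncomputable def bmk (a : Mat n) : MvPolynomial (Fin n) ℤ →+* BRing n a :=
  Ideal.Quotient.mk _

/-- The class `x_i` in the Bott ring (0-based: `bx a i` is the paper's `x_{i+1}`). -/
noncomputable def bx (a : Mat n) (i : Fin n) : BRing n a := bmk n a (X i)

/-- The class of `α_i` in the Bott ring. -/
noncomputable def bal (a : Mat n) (i : Fin n) : BRing n a := bmk n a (alpha n a i)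

/-- `F_k(A)`: the span of the first `k` degree-2 generators (paper's `x_1, …, x_k`,
0-based indices `< k`). -/
noncomputable def F (a : Mat n) (k : ℕ) : Submodule ℤ (BRing n a) :=
  Submodule.span ℤ (bx n a '' {i : Fin n | (i : ℕ) < k})

/-- `H²(A)`: the span of all the degree-2 generators. -/
noncomputable def H2 (a : Mat n) : Submodule ℤ (BRing n a) :=
  Submodule.span ℤ (Set.range (bx n a))

/-- `ht(η) = min {k | η ∈ F_k(A)}`. -/
noncomputable def ht (a : Mat n) (η : BRing n a) : ℕ := sInf {k | η ∈ F n a k}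

/-- A ring isomorphism between Bott rings is graded iff it preserves the degree-2
components in both directions (both rings are generated in degree 2, so this is
equivalent to preserving the whole grading). -/
def IsGraded (a b : Mat n) (φ : BRing n a ≃+* BRing n b) : Prop :=
  (∀ z ∈ H2 n a, φ z ∈ H2 n b) ∧ (∀ z ∈ H2 n b, φ.symm z ∈ H2 n a)

/-- `φ` is `k`-stable: `φ(F_k(A)) ⊆ F_k(B)`. -/
def IsStable (a b : Mat n) (k : ℕ) (φ : BRing n a ≃+* BRing n b) : Prop :=
  ∀ z ∈ F n a k, φ z ∈ F n b k

/-! ### Rationalizations -/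

/-- The linear form `α_i` with rational coefficients. -/
noncomputable def alphaQ (a : Mat n) (i : Fin n) : MvPolynomial (Fin n) ℚ :=
  ∑ j, C ((a i j : ℚ)) * X j

noncomputable def bottIdealQ (a : Mat n) : Ideal (MvPolynomial (Fin n) ℚ) :=
  Ideal.span (Set.range fun i : Fin n => X i ^ 2 - alphaQ n a i * X i)

/-- The rationalized Bott ring `R_A ⊗ ℚ`. -/
abbrev BRingQ (a : Mat n) := MvPolynomial (Fin n) ℚ ⧸ bottIdealQ n a

noncomputable def bmkQ (a : Mat n) : MvPolynomial (Fin n) ℚ →+* BRingQ n a :=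
  Ideal.Quotient.mk _

noncomputable def bxQ (a : Mat n) (i : Fin n) : BRingQ n a := bmkQ n a (X i)

noncomputable def balQ (a : Mat n) (i : Fin n) : BRingQ n a := bmkQ n a (alphaQ n a i)

/-- `F_k(A) ⊗ ℚ` inside `R_A ⊗ ℚ`. -/
noncomputable def FQ (a : Mat n) (k : ℕ) : Submodule ℚ (BRingQ n a) :=
  Submodule.span ℚ (bxQ n a '' {i : Fin n | (i : ℕ) < k})

/-- The canonical map `R_A → R_A ⊗ ℚ`. -/
noncomputable def toQ (a : Mat n) : BRing n a →+* BRingQ n a :=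
  Ideal.Quotient.lift (bottIdeal n a)
    ((bmkQ n a).comp (MvPolynomial.map (Int.castRingHom ℚ)))
    (by
      intro p hp
      have hmap : ∀ i : Fin n,
          MvPolynomial.map (Int.castRingHom ℚ) (alpha n a i) = alphaQ n a i := by
        intro i
        simp [alpha, alphaQ, map_sum]
      have h : bottIdeal n a ≤
          Ideal.comap (MvPolynomial.map (Int.castRingHom ℚ)) (bottIdealQ n a) := by
        rw [bottIdeal, Ideal.span_le]
        rintro _ ⟨i, rfl⟩
        simp only [SetLike.mem_coe, Ideal.mem_comap, map_sub, map_mul, map_pow,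
          MvPolynomial.map_X, hmap]
        exact Ideal.subset_span ⟨i, rfl⟩
      rw [RingHom.comp_apply]
      exact Ideal.Quotient.eq_zero_iff_mem.mpr (h hp))

/-- The truncated linear form `β̄_ℓ` (rational version): for a 0-based row index `li`,
this is `∑_{k ≤ j < li} b_{li,j} y_j`, i.e. the paper's `β_ℓ` with its terms in
`F_k(B)` removed. -/
noncomputable def bbarQ (b : Mat n) (k : ℕ) (li : Fin n) : BRingQ n b :=
  ∑ j ∈ Finset.univ.filter (fun j : Fin n => k ≤ (j : ℕ) ∧ j < li),
    (b li j : ℚ) • bxQ n b j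

/-- Half of the truncated linear form `β̄_ℓ / 2` (meaningful when all relevant entries
are even), as an element of the integral Bott ring. -/
noncomputable def bbarHalf (b : Mat n) (k : ℕ) (li : Fin n) : BRing n b :=
  ∑ j ∈ Finset.univ.filter (fun j : Fin n => k ≤ (j : ℕ) ∧ j < li),
    (b li j / 2) • bx n b j

/-! ### Switching and twisting -/

/-- The matrix obtained from `b` by exchanging the rows and columns `p` and `q`. -/
def swapMat (b : Mat n) (p q : Fin n) : Mat n :=
  fun i j => b (Equiv.swap p q i) (Equiv.swap p q j)

/-- `g : R_C → R_{C'}` is a switching isomorphism: for some `j` (0-based `J`) with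
`c_{j+1,j} = 0`, `C'` is obtained from `C` by exchanging the `j`-th and `(j+1)`-st rows
and columns, and `g` swaps the `j`-th and `(j+1)`-st generators and fixes the others. -/
def IsSwitch (c c' : Mat n) (g : BRing n c ≃+* BRing n c') : Prop :=
  IsGraded n c c' g ∧
  ∃ (J : ℕ) (hJ : J + 1 < n),
    c ⟨J + 1, hJ⟩ ⟨J, by omega⟩ = 0 ∧
    c' = swapMat n c ⟨J, by omega⟩ ⟨J + 1, hJ⟩ ∧
    ∀ i, g (bx n c i) = bx n c' (Equiv.swap (⟨J, by omega⟩ : Fin n) ⟨J + 1, hJ⟩ i)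

/-- `g : R_C → R_{C'}` is a twisting isomorphism: for some `j` (0-based `J`) and
`v ∈ F_{j−1}(C)` with `v(γ_j − v) = 0`, the rows of `C'` before `j` agree with those of
`C`, `γ'_j = γ_j − 2v`, and `g` is a graded isomorphism fixing the first `j−1`
generators. -/
def IsTwist (c c' : Mat n) (g : BRing n c ≃+* BRing n c') : Prop :=
  IsGraded n c c' g ∧
  ∃ (J : ℕ) (hJ : J < n) (v : BRing n c),
    v ∈ F n c J ∧ v * (bal n c ⟨J, hJ⟩ - v) = 0 ∧
    (∀ i : Fin n, (i : ℕ) < J → ∀ m, c' i m = c i m) ∧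
    ((∑ m, c' ⟨J, hJ⟩ m • bx n c m) = bal n c ⟨J, hJ⟩ - 2 • v) ∧
    (∀ i : Fin n, (i : ℕ) < J → g (bx n c i) = bx n c' i)

/-- `IsMoveComp n c c' g` : `g : R_C → R_{C'}` is a finite (possibly empty) composition
of switching and twisting isomorphisms. -/
inductive IsMoveComp : ∀ c c' : Mat n, (BRing n c ≃+* BRing n c') → Prop
  | refl (c : Mat n) : IsMoveComp c c (RingEquiv.refl _)
  | switch {c c' c'' : Mat n} {g : BRing n c ≃+* BRing n c'}
      {g' : BRing n c' ≃+* BRing n c''} :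
      IsMoveComp c c' g → IsSwitch n c' c'' g' → IsMoveComp c c'' (g.trans g')
  | twist {c c' c'' : Mat n} {g : BRing n c ≃+* BRing n c'}
      {g' : BRing n c' ≃+* BRing n c''} :
      IsMoveComp c c' g → IsTwist n c' c'' g' → IsMoveComp c c'' (g.trans g')

end Defs

/-! ### Block matrices for ℚ-trivial Bott manifolds -/

/-- Starting (0-based) index of the `s`-th block for the partition `lam`. -/
def blockStart (t : ℕ) (lam : Fin t → ℕ) (s : Fin t) : ℕ :=
  ∑ s' ∈ Finset.univ.filter (fun s' : Fin t => s' < s), lam s'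

/-- The block-diagonal matrix with diagonal blocks `H_{λ_1}, …, H_{λ_t}`, where `H_j`
is the `j × j` strictly lower triangular matrix whose first column below the diagonal
consists of `1`s and whose other entries vanish. -/
def blockMat (n t : ℕ) (lam : Fin t → ℕ) : Mat n := fun i j =>
  if ∃ s : Fin t, (j : ℕ) = blockStart t lam s ∧ blockStart t lam s < (i : ℕ) ∧
      (i : ℕ) < blockStart t lam s + lam s then 1 else 0

/-- `H²(ℋ_{λ_s})`: the subgroup of the degree-2 component spanned by the generators
belonging to the `s`-th block. -/
noncomputable def blockH2 (n t : ℕ) (lam : Fin t → ℕ) (s : Fin t) :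
    Submodule ℤ (BRing n (blockMat n t lam)) :=
  Submodule.span ℤ (bx n (blockMat n t lam) ''
    {i : Fin n | blockStart t lam s ≤ (i : ℕ) ∧ (i : ℕ) < blockStart t lam s + lam s})

end Bott

namespace Bott

/-! ### Auxiliary development for Statement 7 -/

set_option synthInstance.maxHeartbeats 1000000

namespace Aux7

open Finset

variable {n : ℕ}

theorem flt {p q : Fin n} (h : (p:ℕ) < (q:ℕ)) : p < q := h

/-- The free ℤ-module on squarefree monomials. -/
abbrev MM (n : ℕ) := Finset (Fin n) →₀ ℤ

/-- Basis vector. -/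
noncomputable def ee (S : Finset (Fin n)) : MM n := Finsupp.single S 1

/-- The multiplication-by-`x_i` operator in normal form. -/
noncomputable def xi (a : Mat n) (i : Fin n) : Module.End ℤ (MM n) :=
  Finsupp.lsum ℤ fun S =>
    if i ∈ S then
      (∑ j ∈ (Finset.univ.filter (fun j : Fin n => j < i)).attach,
          a i j.1 • xi a j.1) ∘ₗ Finsupp.lsingle S
    else Finsupp.lsingle (insert i S)
  termination_by i.1
  decreasing_by exact (Finset.mem_filter.mp j.2).2

theorem xi_ee_notMem (a : Mat n) {i : Fin n} {S : Finset (Fin n)} (h : i ∉ S) :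
    xi a i (ee S) = ee (insert i S) := by
  rw [xi, ee]
  simp [Finsupp.lsum_single, h]
  rfl

theorem xi_ee_mem_filter (a : Mat n) {i : Fin n} {S : Finset (Fin n)} (h : i ∈ S) :
    xi a i (ee S) =
      ∑ j ∈ Finset.univ.filter (fun j : Fin n => j < i), a i j • xi a j (ee S) := by
  rw [xi, ee]
  simp only [Finsupp.lsum_single, if_pos h, LinearMap.comp_apply, Finsupp.lsingle_apply]
  rw [LinearMap.sum_apply]
  rw [Finset.sum_attach (Finset.univ.filter (fun j : Fin n => j < i))
    (fun j => (a i j • xi a j) (Finsupp.single S 1))]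
  simp [ee]

theorem xi_ee_mem (a : Mat n) (ha : SLT a) {i : Fin n} {S : Finset (Fin n)} (h : i ∈ S) :
    xi a i (ee S) = ∑ j, a i j • xi a j (ee S) := by
  rw [xi_ee_mem_filter a h]
  refine Finset.sum_subset (Finset.filter_subset _ _) (fun j _ hj => ?_)
  have : a i j = 0 := by
    by_contra hz
    exact hj (Finset.mem_filter.mpr ⟨Finset.mem_univ _, ha i j hz⟩)
  simp [this]

theorem comm_step (a : Mat n) (ha : SLT a) (i j : Fin n) (hji : j < i)
    (IHo : ∀ p q : Fin n, p < i → q < i → xi a p * xi a q = xi a q * xi a p)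
    (IHi : ∀ l : Fin n, l < j → xi a i * xi a l = xi a l * xi a i) :
    xi a i * xi a j = xi a j * xi a i := by
  apply Finsupp.lhom_ext
  intro S b
  have hb : (Finsupp.single S b : MM n) = b • ee S := by
    simp [ee, Finsupp.smul_single]
  rw [hb]
  simp only [Module.End.mul_apply, map_smul]
  congr 1
  have hij : i ≠ j := ne_of_gt hji
  have appo : ∀ p q : Fin n, p < i → q < i → ∀ v : MM n,
      xi a p (xi a q v) = xi a q (xi a p v) := by
    intro p q hp hq v
    rw [← Module.End.mul_apply, IHo p q hp hq, Module.End.mul_apply]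
  have appi : ∀ l : Fin n, l < j → ∀ v : MM n,
      xi a i (xi a l v) = xi a l (xi a i v) := by
    intro l hl v
    rw [← Module.End.mul_apply, IHi l hl, Module.End.mul_apply]
  by_cases hiS : i ∈ S
  · by_cases hjS : j ∈ S
    · -- both in S
      rw [xi_ee_mem a ha hjS, map_sum]
      rw [xi_ee_mem a ha hiS, map_sum]
      calc ∑ l, xi a i (a j l • xi a l (ee S))
          = ∑ l, a j l • xi a l (xi a i (ee S)) := by
            refine Finset.sum_congr rfl fun l _ => ?_
            rw [map_smul]
            by_cases hz : a j l = 0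
            · simp [hz]
            · rw [appi l (ha j l hz)]
        _ = ∑ l, ∑ m, (a j l * a i m) • xi a l (xi a m (ee S)) := by
            refine Finset.sum_congr rfl fun l _ => ?_
            rw [xi_ee_mem a ha hiS, map_sum, Finset.smul_sum]
            refine Finset.sum_congr rfl fun m _ => ?_
            rw [map_smul, smul_smul]
        _ = ∑ m, ∑ l, (a j l * a i m) • xi a l (xi a m (ee S)) := Finset.sum_comm
        _ = ∑ m, a i m • xi a m (∑ l, a j l • xi a l (ee S)) := by
            refine Finset.sum_congr rfl fun m _ => ?_
            rw [map_sum, Finset.smul_sum]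
            refine Finset.sum_congr rfl fun l _ => ?_
            rw [map_smul, smul_smul]
            by_cases hzl : a j l = 0
            · simp [hzl]
            by_cases hzm : a i m = 0
            · simp [hzm]
            rw [appo l m (lt_trans (flt (ha j l hzl)) hji) (flt (ha i m hzm)),
              mul_comm (a j l)]
        _ = ∑ m, a i m • xi a m (xi a j (ee S)) := by rw [← xi_ee_mem a ha hjS]
        _ = ∑ m, xi a j (a i m • xi a m (ee S)) := by
            refine Finset.sum_congr rfl fun m _ => ?_
            rw [map_smul]
            by_cases hz : a i m = 0
            · simp [hz]
            · rw [appo j m hji (flt (ha i m hz))]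
    · -- i ∈ S, j ∉ S
      rw [xi_ee_notMem a hjS]
      have hiS' : i ∈ insert j S := Finset.mem_insert_of_mem hiS
      rw [xi_ee_mem a ha hiS', xi_ee_mem a ha hiS, map_sum]
      refine Finset.sum_congr rfl fun m _ => ?_
      rw [map_smul]
      by_cases hz : a i m = 0
      · simp [hz]
      rw [appo j m hji (flt (ha i m hz)), xi_ee_notMem a hjS]
  · by_cases hjS : j ∈ S
    · -- i ∉ S, j ∈ S
      rw [xi_ee_mem a ha hjS, map_sum, xi_ee_notMem a hiS]
      have hjS' : j ∈ insert i S := Finset.mem_insert_of_mem hjS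
      rw [xi_ee_mem a ha hjS']
      refine Finset.sum_congr rfl fun l _ => ?_
      rw [map_smul]
      by_cases hz : a j l = 0
      · simp [hz]
      rw [appi l (flt (ha j l hz)), xi_ee_notMem a hiS]
    · -- neither
      rw [xi_ee_notMem a hjS, xi_ee_notMem a hiS,
        xi_ee_notMem a (by simp [hij, hiS] : i ∉ insert j S),
        xi_ee_notMem a (by simp [Ne.symm hij, hjS] : j ∉ insert i S),
        Finset.insert_comm]

theorem xi_comm (a : Mat n) (ha : SLT a) (i j : Fin n) :
    xi a i * xi a j = xi a j * xi a i := by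
  have main : ∀ N : ℕ, ∀ i : Fin n, i.1 < N → ∀ j : Fin n, j < i →
      xi a i * xi a j = xi a j * xi a i := by
    intro N
    induction N with
    | zero => omega
    | succ N IHN =>
      intro i hi
      have IHo : ∀ p q : Fin n, p < i → q < i → xi a p * xi a q = xi a q * xi a p := by
        intro p q hp hq
        rcases lt_trichotomy p q with h | h | h
        · exact (IHN q (by omega) p h).symm
        · subst h; rfl
        · exact IHN p (by omega) q h
      have inner : ∀ M : ℕ, ∀ j : Fin n, j.1 < M → j < i →
          xi a i * xi a j = xi a j * xi a i := by
        intro M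
        induction M with
        | zero => omega
        | succ M IHM =>
          intro j hj hji
          exact comm_step a ha i j hji IHo (fun l hl => IHM l (by omega) (lt_trans hl hji))
      exact fun j hji => inner (j.1 + 1) j (by omega) hji
  rcases lt_trichotomy i j with h | h | h
  · exact (main (j.1 + 1) j (by omega) i h).symm
  · subst h; rfl
  · exact main (i.1 + 1) i (by omega) j h


theorem xi_sq (a : Mat n) (ha : SLT a) (i : Fin n) :
    xi a i * xi a i = (∑ j, a i j • xi a j) * xi a i := by
  apply Finsupp.lhom_ext
  intro S b
  have hb : (Finsupp.single S b : MM n) = b • ee S := by simp [ee, Finsupp.smul_single]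
  rw [hb]
  simp only [Module.End.mul_apply, map_smul]
  congr 1
  have expand : ∀ v : MM n, (∑ j, a i j • xi a j) v = ∑ j, a i j • xi a j v := by
    intro v; rw [LinearMap.sum_apply]; simp
  by_cases hiS : i ∈ S
  · rw [xi_ee_mem a ha hiS, expand, map_sum]
    refine Finset.sum_congr rfl fun l _ => ?_
    rw [map_smul]
    by_cases hz : a i l = 0
    · simp [hz]
    have := xi_comm a ha i l
    rw [← Module.End.mul_apply, this, Module.End.mul_apply, ← xi_ee_mem a ha hiS]
  · rw [xi_ee_notMem a hiS, expand]
    exact xi_ee_mem a ha (Finset.mem_insert_self i S)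

/-- Evaluation of polynomials on the commuting operators `xi`. -/
noncomputable def evalXi (a : Mat n) (ha : SLT a) :
    MvPolynomial (Fin n) ℤ →ₐ[ℤ] Module.End ℤ (MM n) :=
  letI : CommRing (Algebra.adjoin ℤ (Set.range (xi a))) :=
    Algebra.adjoinCommRingOfComm ℤ (by
      rintro x ⟨i, rfl⟩ y ⟨j, rfl⟩; exact xi_comm a ha i j)
  (Algebra.adjoin ℤ (Set.range (xi a))).val.comp
    (MvPolynomial.aeval fun i => (⟨xi a i, Algebra.subset_adjoin (Set.mem_range_self i)⟩ :
      Algebra.adjoin ℤ (Set.range (xi a))))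

theorem evalXi_X (a : Mat n) (ha : SLT a) (i : Fin n) :
    evalXi a ha (X i) = xi a i := by
  simp [evalXi]

theorem evalXi_gen (a : Mat n) (ha : SLT a) (i : Fin n) :
    evalXi a ha (X i ^ 2 - alpha n a i * X i) = 0 := by
  have halpha : evalXi a ha (alpha n a i) = ∑ j, a i j • xi a j := by
    rw [alpha, map_sum]
    refine Finset.sum_congr rfl fun j _ => ?_
    rw [← MvPolynomial.smul_eq_C_mul, map_smul, evalXi_X]
  rw [map_sub, map_pow, map_mul, evalXi_X, halpha]
  rw [pow_two, xi_sq a ha i, sub_self]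

/-- The representation of the Bott ring on the free module `MM n`. -/
noncomputable def psi (a : Mat n) (ha : SLT a) :
    BRing n a →+* Module.End ℤ (MM n) :=
  Ideal.Quotient.lift (bottIdeal n a) (evalXi a ha).toRingHom (by
    intro p hp
    have hker : bottIdeal n a ≤ RingHom.ker (evalXi a ha).toRingHom := by
      rw [bottIdeal, Ideal.span_le]
      rintro _ ⟨i, rfl⟩
      simp only [SetLike.mem_coe, RingHom.mem_ker, AlgHom.toRingHom_eq_coe,
        RingHom.coe_coe]
      exact evalXi_gen a ha i
    exact hker hp)

theorem psi_mk (a : Mat n) (ha : SLT a) (p : MvPolynomial (Fin n) ℤ) :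
    psi a ha (bmk n a p) = evalXi a ha p :=
  Ideal.Quotient.lift_mk _ _ _

theorem psi_bx (a : Mat n) (ha : SLT a) (i : Fin n) :
    psi a ha (bx n a i) = xi a i := by
  rw [bx, psi_mk, evalXi_X]

set_option synthInstance.maxHeartbeats 1000000 in
/-- The normal form map. -/
noncomputable def Psi (a : Mat n) (ha : SLT a) : BRing n a →ₗ[ℤ] MM n where
  toFun z := psi a ha z (ee ∅)
  map_add' x y := by
    show psi a ha (x + y) (ee ∅) = psi a ha x (ee ∅) + psi a ha y (ee ∅)
    rw [map_add]; rfl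
  map_smul' r x := by
    show psi a ha (r • x) (ee ∅) = r • psi a ha x (ee ∅)
    rw [map_zsmul]; rfl

theorem Psi_apply (a : Mat n) (ha : SLT a) (z : BRing n a) :
    Psi a ha z = psi a ha z (ee ∅) := rfl

theorem Psi_one (a : Mat n) (ha : SLT a) : Psi a ha 1 = ee ∅ := by
  rw [Psi_apply, map_one]; rfl

theorem Psi_bx_mul (a : Mat n) (ha : SLT a) (i : Fin n) (z : BRing n a) :
    Psi a ha (bx n a i * z) = xi a i (Psi a ha z) := by
  rw [Psi_apply, map_mul, psi_bx, Module.End.mul_apply, Psi_apply]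

theorem Psi_bx' (a : Mat n) (ha : SLT a) (i : Fin n) :
    Psi a ha (bx n a i) = ee {i} := by
  have := Psi_bx_mul a ha i 1
  rw [mul_one, Psi_one] at this
  rw [this, xi_ee_notMem a (Finset.notMem_empty i), Finset.insert_empty]

/-- Squarefree monomial classes. -/
noncomputable def sqf (a : Mat n) (S : Finset (Fin n)) : BRing n a :=
  bmk n a (∏ i ∈ S, X i)

theorem sqf_empty (a : Mat n) : sqf a ∅ = 1 := by
  rw [sqf, Finset.prod_empty, map_one]

theorem sqf_insert (a : Mat n) {i : Fin n} {S : Finset (Fin n)} (h : i ∉ S) :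
    sqf a (insert i S) = bx n a i * sqf a S := by
  rw [sqf, Finset.prod_insert h, map_mul]; rfl

theorem Psi_sqf (a : Mat n) (ha : SLT a) (S : Finset (Fin n)) :
    Psi a ha (sqf a S) = ee S := by
  induction S using Finset.induction with
  | empty => rw [sqf_empty, Psi_one]
  | insert _ _ h ih =>
    rw [sqf_insert a h, Psi_bx_mul, ih, xi_ee_notMem a h]

theorem bx_sq (a : Mat n) (i : Fin n) :
    bx n a i * bx n a i = bal n a i * bx n a i := by
  have h0 : bmk n a (X i ^ 2 - alpha n a i * X i) = 0 :=
    Ideal.Quotient.eq_zero_iff_mem.mpr (Ideal.subset_span ⟨i, rfl⟩)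
  rw [map_sub, map_mul, map_pow, sub_eq_zero] at h0
  rw [← pow_two]
  exact h0

theorem bal_eq (a : Mat n) (i : Fin n) :
    bal n a i = ∑ j, a i j • bx n a j := by
  rw [bal, alpha, map_sum]
  refine Finset.sum_congr rfl fun j _ => ?_
  rw [← MvPolynomial.smul_eq_C_mul, map_zsmul]
  rfl

/-- Span of squarefree monomials. -/
noncomputable def PP (a : Mat n) : Submodule ℤ (BRing n a) :=
  Submodule.span ℤ (Set.range (sqf a))

theorem bx_mul_mem (a : Mat n) (ha : SLT a) (i : Fin n) :
    ∀ z ∈ PP a, bx n a i * z ∈ PP a := by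
  have main : ∀ N : ℕ, ∀ i : Fin n, i.1 < N → ∀ z ∈ PP a, bx n a i * z ∈ PP a := by
    intro N
    induction N with
    | zero => omega
    | succ N IH =>
      intro i hi z hz
      induction hz using Submodule.span_induction with
      | mem x hx =>
        obtain ⟨S, rfl⟩ := hx
        by_cases hiS : i ∈ S
        · have hS : sqf a S = bx n a i * sqf a (S.erase i) := by
            rw [← sqf_insert a (Finset.notMem_erase i S), Finset.insert_erase hiS]
          have h1 : bx n a i * sqf a S = ∑ j, a i j • (bx n a j * sqf a S) := by
            rw [hS, ← mul_assoc, bx_sq, mul_assoc, ← hS, bal_eq, Finset.sum_mul]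
            exact Finset.sum_congr rfl fun j _ => smul_mul_assoc _ _ _
          rw [h1]
          refine Submodule.sum_mem _ fun j _ => ?_
          by_cases hzz : a i j = 0
          · rw [hzz, zero_smul]; exact zero_mem _
          · have hj := ha i j hzz
            exact Submodule.smul_mem _ _
              (IH j (by omega) (sqf a S) (Submodule.subset_span ⟨S, rfl⟩))
        · rw [← sqf_insert a hiS]
          exact Submodule.subset_span ⟨_, rfl⟩
      | zero => rw [mul_zero]; exact zero_mem _
      | add x y hx hy ihx ihy => rw [mul_add]; exact add_mem ihx ihy
      | smul r x hx ihx => rw [mul_smul_comm]; exact Submodule.smul_mem _ _ ihx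
  exact main (i.1 + 1) i (by omega)

theorem PP_eq_top (a : Mat n) (ha : SLT a) : PP a = ⊤ := by
  rw [eq_top_iff]
  rintro z -
  obtain ⟨p, rfl⟩ := Ideal.Quotient.mk_surjective (I := bottIdeal n a) z
  induction p using MvPolynomial.induction_on with
  | C c =>
    have hC : (C c : MvPolynomial (Fin n) ℤ) = c • 1 := by
      rw [MvPolynomial.smul_eq_C_mul, mul_one]
    rw [hC, map_zsmul]
    exact Submodule.smul_mem _ _ (Submodule.subset_span ⟨∅, sqf_empty a⟩)
  | add p q hp hq =>
    rw [map_add]; exact add_mem hp hq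
  | mul_X p i hp =>
    rw [map_mul]
    have : (Ideal.Quotient.mk (bottIdeal n a)) (X i) = bx n a i := rfl
    rw [this, mul_comm]
    exact bx_mul_mem a ha i _ hp

theorem Psi_inj (a : Mat n) (ha : SLT a) : Function.Injective (Psi a ha) := by
  have h0 : ∀ z, Psi a ha z = 0 → z = 0 := by
    intro z hz
    have hzmem : z ∈ PP a := by rw [PP_eq_top a ha]; exact Submodule.mem_top
    obtain ⟨c, hc⟩ := (Submodule.mem_span_range_iff_exists_fun ℤ).mp hzmem
    have hPsi : ∑ S, c S • ee S = 0 := by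
      rw [← hz, ← hc, map_sum]
      exact Finset.sum_congr rfl fun S _ => by rw [map_smul, Psi_sqf]
    have hcz : ∀ T, c T = 0 := by
      intro T
      have := congrArg (fun v : MM n => v T) hPsi
      simp only [Finsupp.finset_sum_apply, Finsupp.smul_apply, ee,
        Finsupp.single_apply, Finsupp.coe_zero, Pi.zero_apply, smul_eq_mul,
        mul_ite, mul_one, mul_zero] at this
      rwa [Finset.sum_ite_eq' Finset.univ T c, if_pos (Finset.mem_univ T)] at this
    rw [← hc]
    exact Finset.sum_eq_zero fun S _ => by rw [hcz S, zero_smul]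
  intro x y hxy
  have : Psi a ha (x - y) = 0 := by rw [map_sub, hxy, sub_self]
  exact sub_eq_zero.mp (h0 _ this)

theorem bx_indep (a : Mat n) (ha : SLT a) (g : Fin n → ℤ)
    (h : ∑ i, g i • bx n a i = 0) : ∀ i, g i = 0 := by
  intro i0
  have hP : ∑ i, g i • ee ({i} : Finset (Fin n)) = (0 : MM n) := by
    have := congrArg (Psi a ha) h
    rw [map_sum, map_zero] at this
    rw [← this]
    exact (Finset.sum_congr rfl fun i _ => by rw [map_smul, Psi_bx']).symm
  have := congrArg (fun v : MM n => v {i0}) hP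
  simp only [Finsupp.finset_sum_apply, Finsupp.smul_apply, ee, Finsupp.single_apply,
    Finsupp.coe_zero, Pi.zero_apply, smul_eq_mul, mul_ite, mul_one, mul_zero] at this
  have hrw : ∀ i : Fin n, (if ({i} : Finset (Fin n)) = {i0} then g i else 0) =
      (if i = i0 then g i else 0) := by
    intro i
    by_cases hii : i = i0
    · simp [hii]
    · rw [if_neg (by simpa using hii), if_neg hii]
  rw [Finset.sum_congr rfl (fun i _ => hrw i),
    Finset.sum_ite_eq' Finset.univ i0 g, if_pos (Finset.mem_univ i0)] at this
  exact this

theorem torsionfree (a : Mat n) (ha : SLT a) {q : ℤ} (hq : q ≠ 0) {z : BRing n a}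
    (h : q • z = 0) : z = 0 := by
  have h1 : q • Psi a ha z = 0 := by rw [← map_smul, h, map_zero]
  have h2 : Psi a ha z = 0 := by
    ext T
    have := congrArg (fun v : MM n => v T) h1
    simp only [Finsupp.smul_apply, smul_eq_mul, Finsupp.coe_zero, Pi.zero_apply] at this
    rcases mul_eq_zero.mp this with h' | h'
    · exact absurd h' hq
    · simpa using h'
  have h3 : Psi a ha z = Psi a ha 0 := by rw [h2, map_zero]
  exact Psi_inj a ha h3

/-- Membership in `H2` in coordinates. -/
theorem mem_H2_iff (a : Mat n) {z : BRing n a} :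
    z ∈ H2 n a ↔ ∃ c : Fin n → ℤ, ∑ i, c i • bx n a i = z := by
  rw [H2]
  exact Submodule.mem_span_range_iff_exists_fun ℤ

/-- Membership in `F_k` in coordinates. -/
theorem mem_F_iff (a : Mat n) {k : ℕ} {z : BRing n a} :
    z ∈ F n a k ↔ ∃ c : Fin n → ℤ, (∀ i : Fin n, ¬ ((i : ℕ) < k) → c i = 0) ∧
      ∑ i, c i • bx n a i = z := by
  constructor
  · intro hz
    induction hz using Submodule.span_induction with
    | mem x hx =>
      obtain ⟨i, hi, rfl⟩ := hx
      refine ⟨fun j => if j = i then 1 else 0, fun j hj => ?_, ?_⟩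
      · show (if j = i then (1:ℤ) else 0) = 0
        rw [if_neg]; rintro rfl; exact hj hi
      · rw [Finset.sum_congr rfl (fun j _ => by
          rw [ite_smul, one_smul, zero_smul]),
          Finset.sum_ite_eq' Finset.univ i (fun j => bx n a j),
          if_pos (Finset.mem_univ i)]
    | zero => exact ⟨0, fun _ _ => rfl, by simp⟩
    | add x y hx hy ihx ihy =>
      obtain ⟨c, hc0, hc⟩ := ihx
      obtain ⟨d, hd0, hd⟩ := ihy
      refine ⟨c + d, fun i hi => by simp [hc0 i hi, hd0 i hi], ?_⟩
      rw [← hc, ← hd, ← Finset.sum_add_distrib]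
      exact Finset.sum_congr rfl fun i _ => by rw [Pi.add_apply, add_smul]
    | smul r x hx ihx =>
      obtain ⟨c, hc0, hc⟩ := ihx
      refine ⟨r • c, fun i hi => by simp [hc0 i hi], ?_⟩
      rw [← hc, Finset.smul_sum]
      exact Finset.sum_congr rfl fun i _ => by
        rw [Pi.smul_apply, smul_assoc]
  · rintro ⟨c, hc0, rfl⟩
    refine Submodule.sum_mem _ fun i _ => ?_
    by_cases hi : (i : ℕ) < k
    · exact Submodule.smul_mem _ _ (Submodule.subset_span ⟨i, hi, rfl⟩)
    · rw [hc0 i hi, zero_smul]; exact zero_mem _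

theorem F_le_H2 (a : Mat n) (k : ℕ) : F n a k ≤ H2 n a :=
  Submodule.span_mono (by rintro _ ⟨i, -, rfl⟩; exact ⟨i, rfl⟩)

theorem xi_ee_single (a : Mat n) (ha : SLT a) (j i : Fin n) :
    xi a j (ee ({i} : Finset (Fin n))) =
      if j = i then ∑ p, a i p • ee (insert p ({i} : Finset (Fin n)))
      else ee (insert j ({i} : Finset (Fin n))) := by
  by_cases h : j = i
  · subst h
    rw [if_pos rfl, xi_ee_mem a ha (Finset.mem_singleton_self j)]
    refine Finset.sum_congr rfl fun p _ => ?_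
    by_cases hz : a j p = 0
    · simp [hz]
    have hpj : p ≠ j := ne_of_lt (flt (ha j p hz))
    rw [xi_ee_notMem a (by simp [hpj])]
  · rw [if_neg h, xi_ee_notMem a (by simp [h])]

theorem Psi_sq_repr (a : Mat n) (ha : SLT a) (c : Fin n → ℤ) :
    Psi a ha ((∑ i, c i • bx n a i) * (∑ i, c i • bx n a i)) =
      ∑ i, ∑ j, (c i * c j) • (xi a j (ee ({i} : Finset (Fin n)))) := by
  have hpsi : psi a ha (∑ i, c i • bx n a i) = ∑ i, c i • xi a i := by
    rw [map_sum]
    exact Finset.sum_congr rfl fun i _ => by rw [map_zsmul, psi_bx]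
  have happ : ∀ v : MM n, psi a ha (∑ i, c i • bx n a i) v = ∑ i, c i • xi a i v := by
    intro v
    rw [hpsi, LinearMap.sum_apply]
    exact Finset.sum_congr rfl fun i _ => by rw [LinearMap.smul_apply]
  rw [Psi_apply, map_mul, Module.End.mul_apply]
  rw [show psi a ha (∑ i, c i • bx n a i) (ee ∅) = ∑ i, c i • ee ({i} : Finset (Fin n)) by
    rw [happ]
    exact Finset.sum_congr rfl fun i _ => by
      rw [xi_ee_notMem a (Finset.notMem_empty i), Finset.insert_empty]]
  rw [map_sum]
  refine Finset.sum_congr rfl fun i _ => ?_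
  rw [map_smul, happ, Finset.smul_sum]
  refine Finset.sum_congr rfl fun j _ => ?_
  rw [smul_smul]

theorem sum_if_two {α : Type*} [Fintype α] [DecidableEq α] {x y : α} (hxy : x ≠ y)
    (u v : ℤ) :
    ∑ i : α, (if i = x then u else if i = y then v else 0) = u + v := by
  have hsplit : ∀ i : α, (if i = x then u else if i = y then v else 0) =
      (if i = x then u else 0) + (if i = y then v else 0) := by
    intro i
    by_cases h1 : i = x
    · subst h1
      rw [if_pos rfl, if_pos rfl, if_neg hxy, add_zero]
    · rw [if_neg h1, if_neg h1, zero_add]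
  rw [Finset.sum_congr rfl fun i _ => hsplit i, Finset.sum_add_distrib,
    Finset.sum_ite_eq' Finset.univ x (fun _ => u), if_pos (Finset.mem_univ x),
    Finset.sum_ite_eq' Finset.univ y (fun _ => v), if_pos (Finset.mem_univ y)]

theorem pair_eval (a : Mat n) (ha : SLT a) (c : Fin n → ℤ) (l m : Fin n)
    (hlm : (l : ℕ) < (m : ℕ))
    (h : (∑ i, ∑ j, (c i * c j) • (xi a j (ee ({i} : Finset (Fin n))))) = (0 : MM n)) :
    c m * c m * a m l + 2 * (c l * c m) = 0 := by
  have hlm' : l ≠ m := by intro e; subst e; exact lt_irrefl _ hlm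
  have hml' : m ≠ l := Ne.symm hlm'
  set T : Finset (Fin n) := {l, m} with hT
  have e1 : ∀ p i : Fin n, (insert p ({i} : Finset (Fin n)) = T) ↔
      ((i = l ∧ p = m) ∨ (i = m ∧ p = l)) := by
    intro p i
    constructor
    · intro hpi
      have hiT : i ∈ T := by
        rw [← hpi]; exact Finset.mem_insert_of_mem (Finset.mem_singleton_self i)
      rw [hT] at hiT
      simp only [Finset.mem_insert, Finset.mem_singleton] at hiT
      rcases hiT with hi | hi
      · left
        refine ⟨hi, ?_⟩
        subst hi
        have : m ∈ insert p ({i} : Finset (Fin n)) := by rw [hpi, hT]; simp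
        simp only [Finset.mem_insert, Finset.mem_singleton] at this
        rcases this with h' | h'
        · exact h'.symm
        · exact absurd h'.symm hlm'
      · right
        refine ⟨hi, ?_⟩
        subst hi
        have : l ∈ insert p ({i} : Finset (Fin n)) := by rw [hpi, hT]; simp
        simp only [Finset.mem_insert, Finset.mem_singleton] at this
        rcases this with h' | h'
        · exact h'.symm
        · exact absurd h' hlm'
    · rintro (⟨hi, hp⟩ | ⟨hi, hp⟩)
      · rw [hi, hp, hT]; exact Finset.pair_comm m l
      · rw [hi, hp, hT]
  -- scalar value of each operator application at T
  have happ : ∀ i j : Fin n, (xi a j (ee ({i} : Finset (Fin n)))) T =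
      (if j = i then (if i = l then a l m else if i = m then a m l else 0)
       else (if (i = l ∧ j = m) ∨ (i = m ∧ j = l) then 1 else 0)) := by
    intro i j
    rw [xi_ee_single a ha j i]
    by_cases hji : j = i
    · rw [if_pos hji, if_pos hji, Finsupp.finset_sum_apply]
      have hterm : ∀ p : Fin n, (a i p • ee (insert p ({i} : Finset (Fin n)))) T =
          (if (i = l ∧ p = m) ∨ (i = m ∧ p = l) then a i p else 0) := by
        intro p
        rw [Finsupp.smul_apply, ee, Finsupp.single_apply]
        by_cases hc : insert p ({i} : Finset (Fin n)) = T
        · rw [if_pos hc, if_pos ((e1 p i).mp hc), smul_eq_mul, mul_one]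
        · rw [if_neg hc, if_neg (fun hh => hc ((e1 p i).mpr hh)), smul_zero]
      rw [Finset.sum_congr rfl fun p _ => hterm p]
      by_cases hil : i = l
      · have h1 : ∀ p : Fin n, (if (i = l ∧ p = m) ∨ (i = m ∧ p = l) then a i p else 0) =
            (if p = m then a i p else 0) := by
          intro p
          by_cases hpm : p = m
          · rw [if_pos (Or.inl ⟨hil, hpm⟩), if_pos hpm]
          · rw [if_neg, if_neg hpm]
            rintro (⟨-, h2⟩ | ⟨h1, -⟩)
            · exact hpm h2
            · exact hlm' (hil ▸ h1)
        rw [Finset.sum_congr rfl fun p _ => h1 p,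
          Finset.sum_ite_eq' Finset.univ m (fun p => a i p), if_pos (Finset.mem_univ m),
          if_pos hil, hil]
      · rw [if_neg hil]
        by_cases him : i = m
        · have h1 : ∀ p : Fin n, (if (i = l ∧ p = m) ∨ (i = m ∧ p = l) then a i p else 0) =
              (if p = l then a i p else 0) := by
            intro p
            by_cases hpl : p = l
            · rw [if_pos (Or.inr ⟨him, hpl⟩), if_pos hpl]
            · rw [if_neg, if_neg hpl]
              rintro (⟨h1, -⟩ | ⟨-, h2⟩)
              · exact hil h1
              · exact hpl h2
          rw [Finset.sum_congr rfl fun p _ => h1 p,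
            Finset.sum_ite_eq' Finset.univ l (fun p => a i p), if_pos (Finset.mem_univ l),
            if_pos him, him]
        · rw [if_neg him]
          refine Finset.sum_eq_zero fun p _ => ?_
          rw [if_neg]
          rintro (⟨h1, -⟩ | ⟨h1, -⟩)
          · exact hil h1
          · exact him h1
    · rw [if_neg hji, if_neg hji, ee, Finsupp.single_apply]
      by_cases hc : insert j ({i} : Finset (Fin n)) = T
      · rw [if_pos hc, if_pos ((e1 j i).mp hc)]
      · rw [if_neg hc, if_neg (fun hh => hc ((e1 j i).mpr hh))]
  -- evaluate the double sum at T
  have hTeval := congrArg (fun v : MM n => v T) h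
  simp only [Finsupp.finset_sum_apply, Finsupp.coe_zero, Pi.zero_apply] at hTeval
  have key : ∀ i : Fin n,
      (∑ j, (((c i * c j) • (xi a j (ee ({i} : Finset (Fin n))))) T)) =
      (if i = l then c l * c l * a l m + c l * c m
       else if i = m then c m * c m * a m l + c m * c l else 0) := by
    intro i
    have hterm : ∀ j : Fin n, (((c i * c j) • (xi a j (ee ({i} : Finset (Fin n))))) T) =
        (c i * c j) * (xi a j (ee ({i} : Finset (Fin n)))) T := by
      intro j; rw [Finsupp.smul_apply, smul_eq_mul]
    rw [Finset.sum_congr rfl fun j _ => hterm j]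
    by_cases hil : i = l
    · rw [if_pos hil]
      have hval : ∀ j : Fin n, (c i * c j) * (xi a j (ee ({i} : Finset (Fin n)))) T =
          (if j = i then c l * c l * a l m else if j = m then c l * c m else 0) := by
        intro j
        rw [happ i j]
        by_cases hji : j = i
        · rw [if_pos hji, if_pos hji, if_pos hil, hji, hil]
        · rw [if_neg hji, if_neg hji]
          by_cases hjm : j = m
          · rw [if_pos (Or.inl ⟨hil, hjm⟩), if_pos hjm, mul_one, hil, hjm]
          · rw [if_neg hjm, if_neg, mul_zero]
            rintro (⟨-, h2⟩ | ⟨h1, -⟩)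
            · exact hjm h2
            · exact hlm' (hil ▸ h1)
      rw [Finset.sum_congr rfl fun j _ => hval j, hil, sum_if_two hlm']
    · rw [if_neg hil]
      by_cases him : i = m
      · rw [if_pos him]
        have hval : ∀ j : Fin n, (c i * c j) * (xi a j (ee ({i} : Finset (Fin n)))) T =
            (if j = i then c m * c m * a m l else if j = l then c m * c l else 0) := by
          intro j
          rw [happ i j]
          by_cases hji : j = i
          · rw [if_pos hji, if_pos hji, if_neg (him ▸ hil), if_pos him, hji, him]
          · rw [if_neg hji, if_neg hji]
            by_cases hjl : j = l
            · rw [if_pos (Or.inr ⟨him, hjl⟩), if_pos hjl, mul_one, him, hjl]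
            · rw [if_neg hjl, if_neg, mul_zero]
              rintro (⟨h1, -⟩ | ⟨-, h2⟩)
              · exact hil h1
              · exact hjl h2
        rw [Finset.sum_congr rfl fun j _ => hval j, him, sum_if_two hml']
      · rw [if_neg him]
        refine Finset.sum_eq_zero fun j _ => ?_
        rw [happ i j]
        by_cases hji : j = i
        · rw [if_pos hji, if_neg hil, if_neg him, mul_zero]
        · rw [if_neg hji, if_neg, mul_zero]
          rintro (⟨h1, -⟩ | ⟨h1, -⟩)
          · exact hil h1
          · exact him h1
  rw [show (∑ i, ∑ j, (((c i * c j) • (xi a j (ee ({i} : Finset (Fin n))))) T)) =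
      ∑ i, (if i = l then c l * c l * a l m + c l * c m
       else if i = m then c m * c m * a m l + c m * c l else 0) from
    Finset.sum_congr rfl fun i _ => key i] at hTeval
  rw [sum_if_two hlm'] at hTeval
  have hzlm : a l m = 0 := by
    by_contra hz
    have := ha l m hz
    omega
  rw [hzlm] at hTeval
  linear_combination hTeval
set_option maxHeartbeats 1000000

/-- `k`, the number of indices with `α_i² = 0`. -/
noncomputable def kk (a : Mat n) : ℕ := Nat.card {i : Fin n // bal n a i ^ 2 = 0}

theorem kk_card (a : Mat n) [DecidablePred fun i : Fin n => bal n a i ^ 2 = 0] :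
    kk a = (Finset.univ.filter (fun i : Fin n => bal n a i ^ 2 = 0)).card := by
  rw [kk, Nat.card_eq_fintype_card, Fintype.card_subtype]

theorem kk_le (a : Mat n) : kk a ≤ n := by
  classical
  rw [kk_card]
  calc (Finset.univ.filter (fun i : Fin n => bal n a i ^ 2 = 0)).card
      ≤ (Finset.univ : Finset (Fin n)).card := Finset.card_le_card (Finset.filter_subset _ _)
    _ = n := by simp

theorem lt_kk_of_sq_zero (a : Mat n)
    (hwa : ∀ j : Fin n, bal n a j ^ 2 = 0 → ∀ i < j, bal n a i ^ 2 = 0)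
    {m : Fin n} (hm : bal n a m ^ 2 = 0) : (m : ℕ) < kk a := by
  classical
  rw [kk_card]
  have hsub : Finset.Iic m ⊆ Finset.univ.filter (fun i : Fin n => bal n a i ^ 2 = 0) := by
    intro j hj
    rw [Finset.mem_Iic] at hj
    rcases lt_or_eq_of_le hj with h | h
    · exact Finset.mem_filter.mpr ⟨Finset.mem_univ _, hwa m hm j h⟩
    · rw [h]; exact Finset.mem_filter.mpr ⟨Finset.mem_univ _, hm⟩
  have := Finset.card_le_card hsub
  rw [Fin.card_Iic] at this
  omega

theorem sq_zero_of_lt_kk (a : Mat n)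
    (hwa : ∀ j : Fin n, bal n a j ^ 2 = 0 → ∀ i < j, bal n a i ^ 2 = 0)
    {i : Fin n} (hi : (i : ℕ) < kk a) : bal n a i ^ 2 = 0 := by
  classical
  by_contra hni
  have hsub : Finset.univ.filter (fun j : Fin n => bal n a j ^ 2 = 0) ⊆ Finset.Iio i := by
    intro j hj
    have hj' := (Finset.mem_filter.mp hj).2
    rw [Finset.mem_Iio]
    rcases lt_trichotomy j i with h | h | h
    · exact h
    · exact absurd (h ▸ hj') hni
    · exact absurd (hwa j hj' i h) hni
  have := Finset.card_le_card hsub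
  rw [Fin.card_Iio, ← kk_card] at this
  omega

/-- The height lemma: a square-zero element of `H²` lies in `F_k`. -/
theorem height (a : Mat n) (ha : SLT a)
    (hwa : ∀ j : Fin n, bal n a j ^ 2 = 0 → ∀ i < j, bal n a i ^ 2 = 0)
    {η : BRing n a} (hη : η ∈ H2 n a) (hsq : η * η = 0) : η ∈ F n a (kk a) := by
  obtain ⟨c, hc⟩ := (mem_H2_iff a).mp hη
  by_cases hTc : Finset.univ.filter (fun i : Fin n => c i ≠ 0) = ∅
  · have hz : ∀ i, c i = 0 := by
      intro i
      by_contra hne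
      exact Finset.notMem_empty i
        (hTc ▸ Finset.mem_filter.mpr ⟨Finset.mem_univ _, hne⟩)
    have : η = 0 := by
      rw [← hc]
      exact Finset.sum_eq_zero fun i _ => by rw [hz i, zero_smul]
    rw [this]; exact zero_mem _
  · set m := (Finset.univ.filter (fun i : Fin n => c i ≠ 0)).max'
      (Finset.nonempty_of_ne_empty hTc) with hm
    have hmem : m ∈ Finset.univ.filter (fun i : Fin n => c i ≠ 0) :=
      Finset.max'_mem (Finset.univ.filter (fun i : Fin n => c i ≠ 0))
        (Finset.nonempty_of_ne_empty hTc)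
    have hcm : c m ≠ 0 := (Finset.mem_filter.mp hmem).2
    have hmax : ∀ i : Fin n, c i ≠ 0 → i ≤ m := fun i hi =>
      Finset.le_max' _ i (Finset.mem_filter.mpr ⟨Finset.mem_univ _, hi⟩)
    have h0 : (∑ i, ∑ j, (c i * c j) • (xi a j (ee ({i} : Finset (Fin n))))) = (0 : MM n) := by
      rw [← Psi_sq_repr a ha c, hc, hsq, map_zero]
    have hfac : ∀ l : Fin n, (l : ℕ) < (m : ℕ) → c m * a m l + 2 * c l = 0 := by
      intro l hl
      have hkey := pair_eval a ha c l m hl h0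
      have : c m * (c m * a m l + 2 * c l) = 0 := by linear_combination hkey
      rcases mul_eq_zero.mp this with h' | h'
      · exact absurd h' hcm
      · exact h'
    have h2η : (2:ℤ) • η = c m • ((2:ℤ) • bx n a m - bal n a m) := by
      rw [smul_sub, smul_smul, bal_eq, Finset.smul_sum, ← hc, Finset.smul_sum]
      rw [eq_sub_iff_add_eq]
      have hLHS : ∀ j : Fin n, (2:ℤ) • c j • bx n a j = (2 * c j) • bx n a j := by
        intro j; rw [smul_smul]
      have hRHS : ∀ j : Fin n, c m • a m j • bx n a j = (c m * a m j) • bx n a j := by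
        intro j; rw [smul_smul]
      rw [Finset.sum_congr rfl fun j _ => hLHS j, Finset.sum_congr rfl fun j _ => hRHS j,
        ← Finset.sum_add_distrib]
      have hterm : ∀ j : Fin n, ((2 * c j) • bx n a j + (c m * a m j) • bx n a j) =
          (if j = m then (2 * c m : ℤ) • bx n a m else 0) := by
        intro j
        rw [← add_smul]
        by_cases hjm : j = m
        · rw [if_pos hjm, hjm]
          have hamm : a m m = 0 := by
            by_contra hz
            exact lt_irrefl _ (ha m m hz)
          rw [hamm, mul_zero, add_zero]
        · rw [if_neg hjm]
          have hco : 2 * c j + c m * a m j = 0 := by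
            rcases lt_trichotomy (j : ℕ) (m : ℕ) with h' | h' | h'
            · have := hfac j h'
              linarith
            · exact absurd (Fin.ext h' : j = m) hjm
            · have hcj : c j = 0 := by
                by_contra hne
                have h1 : (j : ℕ) ≤ (m : ℕ) := hmax j hne
                omega
              have haj : a m j = 0 := by
                by_contra hz
                have := ha m j hz
                omega
              rw [hcj, haj, mul_zero, mul_zero, add_zero]
          rw [hco, zero_smul]
      rw [Finset.sum_congr rfl fun j _ => hterm j,
        Finset.sum_ite_eq' Finset.univ m (fun _ => (2 * c m : ℤ) • bx n a m),
        if_pos (Finset.mem_univ m), mul_comm (c m) 2]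
    have hW : ((2:ℤ) • bx n a m - bal n a m) * ((2:ℤ) • bx n a m - bal n a m) =
        bal n a m * bal n a m := by
      have hbx := bx_sq a m
      have h2 : (2:ℤ) • bx n a m = bx n a m + bx n a m := two_smul ℤ _
      rw [h2]
      linear_combination (4 : BRing n a) * hbx
    have hsq2 : (c m * c m) • (bal n a m * bal n a m) = 0 := by
      have e1 : ((2:ℤ) • η) * ((2:ℤ) • η) = (4:ℤ) • (η * η) := by
        rw [smul_mul_smul_comm]
        norm_num
      have e2 : ((2:ℤ) • η) * ((2:ℤ) • η) =
          (c m * c m) • (bal n a m * bal n a m) := by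
        rw [h2η, smul_mul_smul_comm, hW]
      rw [← e2, e1, hsq, smul_zero]
    have hbal : bal n a m * bal n a m = 0 :=
      torsionfree a ha (mul_ne_zero hcm hcm) hsq2
    have hmk : (m : ℕ) < kk a :=
      lt_kk_of_sq_zero a hwa (by rw [pow_two]; exact hbal)
    refine (mem_F_iff a).mpr ⟨c, fun i hi => ?_, hc⟩
    by_contra hne
    have h1 : (i : ℕ) ≤ (m : ℕ) := hmax i hne
    omega

/-- Span of square-zero elements of `H²`. -/
noncomputable def Wsub (a : Mat n) : Submodule ℤ (BRing n a) :=
  Submodule.span ℤ {z : BRing n a | z ∈ H2 n a ∧ z * z = 0}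

theorem W_le_F (a : Mat n) (ha : SLT a)
    (hwa : ∀ j : Fin n, bal n a j ^ 2 = 0 → ∀ i < j, bal n a i ^ 2 = 0) :
    Wsub a ≤ F n a (kk a) := by
  rw [Wsub, Submodule.span_le]
  rintro z ⟨hz1, hz2⟩
  exact height a ha hwa hz1 hz2

theorem bal_mem_H2 (a : Mat n) (i : Fin n) : bal n a i ∈ H2 n a := by
  rw [bal_eq]
  exact Submodule.sum_mem _ fun j _ =>
    Submodule.smul_mem _ _ (Submodule.subset_span ⟨j, rfl⟩)

theorem bx_mem_H2 (a : Mat n) (i : Fin n) : bx n a i ∈ H2 n a :=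
  Submodule.subset_span ⟨i, rfl⟩

/-- The generator `2x_i − α_i` is a square-zero element of `H²` when `α_i² = 0`. -/
theorem gen_mem_W (a : Mat n) (hsq : bal n a i ^ 2 = 0) :
    (2:ℤ) • bx n a i - bal n a i ∈ Wsub a := by
  refine Submodule.subset_span ⟨?_, ?_⟩
  · exact Submodule.sub_mem _ (Submodule.smul_mem _ _ (bx_mem_H2 a i)) (bal_mem_H2 a i)
  · have hbx := bx_sq a i
    have h2 : (2:ℤ) • bx n a i = bx n a i + bx n a i := two_smul ℤ _
    rw [h2]
    rw [pow_two] at hsq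
    linear_combination (4 : BRing n a) * hbx + hsq

theorem pow_smul_bx_mem_W (a : Mat n) (ha : SLT a)
    (hwa : ∀ j : Fin n, bal n a j ^ 2 = 0 → ∀ i < j, bal n a i ^ 2 = 0) :
    ∀ i : Fin n, (i : ℕ) < kk a → ((2:ℤ) ^ ((i : ℕ) + 1)) • bx n a i ∈ Wsub a := by
  have main : ∀ N : ℕ, ∀ i : Fin n, (i : ℕ) < N → (i : ℕ) < kk a →
      ((2:ℤ) ^ ((i : ℕ) + 1)) • bx n a i ∈ Wsub a := by
    intro N
    induction N with
    | zero => omega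
    | succ N IH =>
      intro i hiN hik
      have hgen : (2:ℤ) • bx n a i - bal n a i ∈ Wsub a :=
        gen_mem_W a (sq_zero_of_lt_kk a hwa hik)
      have hdecomp : ((2:ℤ) ^ ((i : ℕ) + 1)) • bx n a i =
          ((2:ℤ) ^ (i : ℕ)) • ((2:ℤ) • bx n a i - bal n a i) +
          ((2:ℤ) ^ (i : ℕ)) • bal n a i := by
        rw [smul_sub, sub_add_cancel, smul_smul, ← pow_succ]
      rw [hdecomp]
      refine Submodule.add_mem _ (Submodule.smul_mem _ _ hgen) ?_
      rw [bal_eq, Finset.smul_sum]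
      refine Submodule.sum_mem _ fun j _ => ?_
      by_cases hz : a i j = 0
      · rw [hz, zero_smul, smul_zero]; exact zero_mem _
      · have hji : (j : ℕ) < (i : ℕ) := ha i j hz
        have hsplit : ((2:ℤ) ^ (i : ℕ)) • (a i j • bx n a j) =
            (a i j * (2:ℤ) ^ ((i : ℕ) - ((j : ℕ) + 1))) •
              (((2:ℤ) ^ ((j : ℕ) + 1)) • bx n a j) := by
          rw [smul_smul, smul_smul]
          congr 1
          rw [mul_assoc, ← pow_add]
          have : (i : ℕ) - ((j : ℕ) + 1) + ((j : ℕ) + 1) = (i : ℕ) := by omega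
          rw [this, mul_comm]
        rw [hsplit]
        exact Submodule.smul_mem _ _ (IH j (by omega) (by omega))
  exact fun i hik => main ((i : ℕ) + 1) i (by omega) hik

theorem F_le_sat (a : Mat n) (ha : SLT a)
    (hwa : ∀ j : Fin n, bal n a j ^ 2 = 0 → ∀ i < j, bal n a i ^ 2 = 0)
    {η : BRing n a} (hη : η ∈ F n a (kk a)) : ((2:ℤ) ^ n) • η ∈ Wsub a := by
  obtain ⟨c, hc0, rfl⟩ := (mem_F_iff a).mp hη
  rw [Finset.smul_sum]
  refine Submodule.sum_mem _ fun i _ => ?_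
  by_cases hik : (i : ℕ) < kk a
  · have hsplit : ((2:ℤ) ^ n) • (c i • bx n a i) =
        (c i * (2:ℤ) ^ (n - ((i : ℕ) + 1))) • (((2:ℤ) ^ ((i : ℕ) + 1)) • bx n a i) := by
      rw [smul_smul, smul_smul]
      congr 1
      rw [mul_assoc, ← pow_add]
      have : n - ((i : ℕ) + 1) + ((i : ℕ) + 1) = n := by
        have := i.isLt
        omega
      rw [this, mul_comm]
    rw [hsplit]
    exact Submodule.smul_mem _ _ (pow_smul_bx_mem_W a ha hwa i hik)
  · rw [hc0 i hik, zero_smul, smul_zero]; exact zero_mem _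

/-- The saturation set: an intrinsic, ring-theoretic description of `F_k`. -/
def SatSet (a : Mat n) : Set (BRing n a) :=
  {η | η ∈ H2 n a ∧ ∃ q : ℤ, q ≠ 0 ∧ q • η ∈ Wsub a}

theorem F_eq_sat (a : Mat n) (ha : SLT a)
    (hwa : ∀ j : Fin n, bal n a j ^ 2 = 0 → ∀ i < j, bal n a i ^ 2 = 0) :
    (F n a (kk a) : Set (BRing n a)) = SatSet a := by
  ext η
  constructor
  · intro hη
    refine ⟨F_le_H2 a (kk a) hη, (2:ℤ) ^ n, by positivity, F_le_sat a ha hwa hη⟩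
  · rintro ⟨hη2, q, hq, hqW⟩
    have hqF : q • η ∈ F n a (kk a) := W_le_F a ha hwa hqW
    obtain ⟨c, hc⟩ := (mem_H2_iff a).mp hη2
    obtain ⟨d, hd0, hd⟩ := (mem_F_iff a).mp hqF
    have hqη : ∑ i, (q * c i) • bx n a i = q • η := by
      rw [← hc, Finset.smul_sum]
      exact Finset.sum_congr rfl fun i _ => by rw [smul_smul]
    have hzero : ∑ i, (d i - q * c i) • bx n a i = 0 := by
      have hsplit : ∑ i, (d i - q * c i) • bx n a i =
          (∑ i, d i • bx n a i) - (∑ i, (q * c i) • bx n a i) := by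
        rw [← Finset.sum_sub_distrib]
        exact Finset.sum_congr rfl fun i _ => by rw [sub_smul]
      rw [hsplit, hd, hqη, sub_self]
    have hdq := bx_indep a ha _ hzero
    refine (mem_F_iff a).mpr ⟨c, fun i hi => ?_, hc⟩
    have h1 : d i - q * c i = 0 := hdq i
    have h2 : d i = 0 := hd0 i hi
    have h3 : q * c i = 0 := by omega
    rcases mul_eq_zero.mp h3 with h' | h'
    · exact absurd h' hq
    · exact h' 

theorem mapsW {a b : Mat n} (φ : BRing n a ≃+* BRing n b) (hφ : IsGraded n a b φ) :
    ∀ z ∈ Wsub a, φ z ∈ Wsub b := by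
  intro z hz
  induction hz using Submodule.span_induction with
  | mem x hx =>
    exact Submodule.subset_span ⟨hφ.1 x hx.1, by rw [← map_mul, hx.2, map_zero]⟩
  | zero => rw [map_zero]; exact zero_mem _
  | add x y hx hy ihx ihy => rw [map_add]; exact add_mem ihx ihy
  | smul r x hx ihx => rw [map_zsmul]; exact Submodule.smul_mem _ _ ihx

theorem mapsSat {a b : Mat n} (φ : BRing n a ≃+* BRing n b) (hφ : IsGraded n a b φ) :
    ∀ η ∈ SatSet a, φ η ∈ SatSet b := by
  rintro η ⟨hη2, q, hq, hqW⟩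
  exact ⟨hφ.1 η hη2, q, hq, by rw [← map_zsmul]; exact mapsW φ hφ _ hqW⟩

theorem graded_symm {a b : Mat n} (φ : BRing n a ≃+* BRing n b) (hφ : IsGraded n a b φ) :
    IsGraded n b a φ.symm := by
  refine ⟨hφ.2, fun z hz => ?_⟩
  rw [RingEquiv.symm_symm]
  exact hφ.1 z hz

theorem img_sat {a b : Mat n} (φ : BRing n a ≃+* BRing n b) (hφ : IsGraded n a b φ) :
    ⇑φ '' SatSet a = SatSet b := by
  ext z
  constructor
  · rintro ⟨η, hη, rfl⟩
    exact mapsSat φ hφ η hη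
  · intro hz
    exact ⟨φ.symm z, mapsSat φ.symm (graded_symm φ hφ) z hz, by simp⟩

theorem li_bx (a : Mat n) (ha : SLT a) :
    LinearIndependent ℤ (fun i : Fin n => bx n a i) :=
  Fintype.linearIndependent_iff.mpr fun g hg => bx_indep a ha g hg

theorem card_subtype_lt (k : ℕ) (hk : k ≤ n) :
    Fintype.card {i : Fin n // (i : ℕ) < k} = k := by
  have e : Fin k ≃ {i : Fin n // (i : ℕ) < k} :=
    { toFun := fun j => ⟨⟨j.1, lt_of_lt_of_le j.2 hk⟩, j.2⟩
      invFun := fun x => ⟨x.1.1, x.2⟩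
      left_inv := fun j => rfl
      right_inv := fun x => rfl }
  rw [← Fintype.card_congr e, Fintype.card_fin]

theorem finrank_F (a : Mat n) (ha : SLT a) (k : ℕ) (hk : k ≤ n) :
    Module.finrank ℤ (F n a k) = k := by
  have li_v : LinearIndependent ℤ
      ((fun i : Fin n => bx n a i) ∘ (Subtype.val : {i : Fin n // (i : ℕ) < k} → Fin n)) :=
    (li_bx a ha).comp Subtype.val Subtype.val_injective
  have hFr : F n a k = Submodule.span ℤ (Set.range
      ((fun i : Fin n => bx n a i) ∘ (Subtype.val : {i : Fin n // (i : ℕ) < k} → Fin n))) := by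
    rw [F, Set.image_eq_range]
    rfl
  have basisF : Module.Basis {i : Fin n // (i : ℕ) < k} ℤ (F n a k) :=
    (Module.Basis.span li_v).map (LinearEquiv.ofEq _ _ hFr.symm)
  rw [Module.finrank_eq_card_basis basisF, card_subtype_lt k hk]

theorem kk_eq {a b : Mat n} (ha : SLT a) (hb : SLT b)
    (hwa : ∀ j : Fin n, bal n a j ^ 2 = 0 → ∀ i < j, bal n a i ^ 2 = 0)
    (hwb : ∀ j : Fin n, bal n b j ^ 2 = 0 → ∀ i < j, bal n b i ^ 2 = 0)
    (φ : BRing n a ≃+* BRing n b) (hφ : IsGraded n a b φ) :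
    kk a = kk b ∧ ⇑φ '' (F n a (kk a) : Set (BRing n a)) = (F n b (kk b) : Set (BRing n b)) := by
  have himg : ⇑φ '' (F n a (kk a) : Set (BRing n a)) = (F n b (kk b) : Set (BRing n b)) := by
    rw [F_eq_sat a ha hwa, F_eq_sat b hb hwb]
    exact img_sat φ hφ
  refine ⟨?_, himg⟩
  set eL : BRing n a ≃ₗ[ℤ] BRing n b := φ.toAddEquiv.toIntLinearEquiv with heL
  have hcoe : ∀ z, eL z = φ z := fun z => rfl
  have hmap : (F n a (kk a)).map (eL : BRing n a →ₗ[ℤ] BRing n b) = F n b (kk b) := by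
    apply SetLike.coe_injective
    rw [Submodule.map_coe]
    rw [show ⇑(eL : BRing n a →ₗ[ℤ] BRing n b) = ⇑φ from rfl]
    exact himg
  have e2 : (F n a (kk a)) ≃ₗ[ℤ] (F n b (kk b)) :=
    LinearEquiv.ofSubmodules eL _ _ hmap
  have h1 := finrank_F a ha (kk a) (kk_le a)
  have h2 := finrank_F b hb (kk b) (kk_le b)
  rw [← h1, ← h2]
  exact LinearEquiv.finrank_eq e2

end Aux7

/-- Assume `A` and `B` are well-ordered (`α_j² = 0` implies
`α_i² = 0` for `i < j`, and likewise for the `β`'s).  Let `φ : R_A → R_B` be a graded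
ring isomorphism and `k := #{i : α_i² = 0}`.  Then `k = #{i : β_i² = 0}` and
`φ(F_k(A)) = F_k(B)`; in particular `φ` is `k`-stable. -/
theorem stmt_7 (n : ℕ) (hn : 1 ≤ n) (a b : Mat n) (ha : SLT a) (hb : SLT b)
    (hwa : ∀ j : Fin n, bal n a j ^ 2 = 0 → ∀ i < j, bal n a i ^ 2 = 0)
    (hwb : ∀ j : Fin n, bal n b j ^ 2 = 0 → ∀ i < j, bal n b i ^ 2 = 0)
    (φ : BRing n a ≃+* BRing n b) (hφ : IsGraded n a b φ) :
    Nat.card {i : Fin n // bal n a i ^ 2 = 0} = Nat.card {i : Fin n // bal n b i ^ 2 = 0} ∧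
    ⇑φ '' (F n a (Nat.card {i : Fin n // bal n a i ^ 2 = 0}) : Set (BRing n a)) =
      (F n b (Nat.card {i : Fin n // bal n a i ^ 2 = 0}) : Set (BRing n b)) ∧
    IsStable n a b (Nat.card {i : Fin n // bal n a i ^ 2 = 0}) φ := by
  obtain ⟨hkeq, himg⟩ := Aux7.kk_eq ha hb hwa hwb φ hφ
  have himg' : ⇑φ '' (F n a (Aux7.kk a) : Set (BRing n a)) =
      (F n b (Aux7.kk a) : Set (BRing n b)) := by
    rw [← hkeq] at himg
    exact himg
  refine ⟨hkeq, himg', fun z hz => ?_⟩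
  have hmem : φ z ∈ (F n b (Aux7.kk a) : Set (BRing n b)) := by
    rw [← himg']
    exact ⟨z, hz, rfl⟩
  exact hmem

end Bott
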